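/- Let f : ℝ^d → ℝ be a ρ-weakly convex function and M a C¹ manifold contained in a neighborhood of x̄ with x̄ ∈ M, such that M is an active manifold for f at x̄ with 0 ∈ ∂̂f(x̄), so that f(y) − f(P_M(y)) ≥ μ·dist(y, M) for all y near x̄ and some μ > 0. Then for all y near x̄ and all v ∈ ∂f(y): ⟨v, y − P_M(y)⟩ ≥ (μ/2)·dist(y, M). -/
import Mathlib


open Filter Topology Metric
open scoped RealInnerProductSpace

variable {E : Type*} [NormedAddCommGroup E] [InnerProductSpace ℝ E]

/-- The Fréchet subdifferential of `f : E → ℝ` at `x`. -/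
def frechetSubdiff (f : E → ℝ) (x : E) : Set E :=
  {v | ∀ ε > 0, ∃ δ > 0, ∀ y : E, ‖y - x‖ < δ →
    f x + ⟪v, y - x⟫ - ε * ‖y - x‖ ≤ f y}

/-- The limiting subdifferential of `f : E → ℝ` at `x`. -/
def limitingSubdiff (f : E → ℝ) (x : E) : Set E :=
  {v | ∃ xs vs : ℕ → E, (∀ n, vs n ∈ frechetSubdiff f (xs n)) ∧
    Tendsto xs atTop (𝓝 x) ∧ Tendsto (fun n => f (xs n)) atTop (𝓝 (f x)) ∧
    Tendsto vs atTop (𝓝 v)}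

/-- Let `f` be `ρ`-weakly convex (subgradients give quadratic minorants) and
`M ∋ x̄` an active manifold along which the sharp growth
`f(y) − f(P_M(y)) ≥ μ·dist(y, M)` holds for `y` near `x̄`. Then for all `y` near `x̄`, nearest
points `p = P_M(y)`, and `v ∈ ∂f(y)`, one has `⟪v, y − p⟫ ≥ (μ/2)·dist(y, M)`. -/
theorem weaklyConvex_proximal_aiming
    (f : E → ℝ) (ρ : ℝ) (hρ : 0 ≤ ρ)
    (hwc : ∀ y z : E, ∀ v ∈ limitingSubdiff f y,
      f y + ⟪v, z - y⟫ - ρ / 2 * ‖z - y‖ ^ 2 ≤ f z)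
    (M : Set E) (xbar : E) (hx : xbar ∈ M)
    (μ ε : ℝ) (hμ : 0 < μ) (hε : 0 < ε)
    (hgrowth : ∀ y ∈ ball xbar ε, ∀ p ∈ M, ‖y - p‖ = infDist y M →
      μ * infDist y M ≤ f y - f p) :
    ∃ δ > 0, ∀ y ∈ ball xbar δ, ∀ p ∈ M, ‖y - p‖ = infDist y M →
      ∀ v ∈ limitingSubdiff f y, μ / 2 * infDist y M ≤ ⟪v, y - p⟫ := by
  refine ⟨min ε (μ / (ρ + 1)), lt_min hε (div_pos hμ (by linarith)), ?_⟩
  intro y hy p hp hdist v hv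
  have hyε : y ∈ ball xbar ε := mem_ball.2 (lt_of_lt_of_le (mem_ball.1 hy) (min_le_left _ _))
  have hd0 : 0 ≤ infDist y M := infDist_nonneg
  have hdle : infDist y M ≤ ‖y - xbar‖ := by
    simpa [dist_eq_norm] using infDist_le_dist_of_mem (x := y) hx
  have hdlt : infDist y M < μ / (ρ + 1) :=
    lt_of_le_of_lt hdle (lt_of_lt_of_le (by simpa [dist_eq_norm] using mem_ball.1 hy)
      (min_le_right _ _))
  have hgr := hgrowth y hyε p hp hdist
  have hwc' := hwc y p v hv
  have hnorm : ‖p - y‖ = infDist y M := by rw [← hdist, norm_sub_rev]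
  have hinner : ⟪v, p - y⟫ = -⟪v, y - p⟫ := by
    rw [show p - y = -(y - p) by abel, inner_neg_right]
  rw [hnorm, hinner] at hwc'
  -- ρ/2 * d^2 ≤ μ/2 * d
  have hkey : ρ / 2 * infDist y M ^ 2 ≤ μ / 2 * infDist y M := by
    have h1 : ρ * infDist y M ≤ μ := by
      rcases eq_or_lt_of_le hd0 with h | h
      · nlinarith
      · have hρ1 : (0:ℝ) < ρ + 1 := by linarith
        have heq : (ρ + 1) * (μ / (ρ + 1)) = μ := by field_simp
        nlinarith [mul_lt_mul_of_pos_left hdlt hρ1]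
    nlinarith
  nlinarith
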